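/- For any positive integer n, the operator ∂ₙ sending a finite set J of integers to the symmetric difference J Δ (J - n) is injective on the collection of finite subsets of ℤ, and its image is exactly the set of finite subsets K of ℤ such that for each residue i with 0 ≤ i ≤ n-1, the set {j ∈ ℤ : nj + i ∈ K} has even cardinality. -/
import Mathlib


/-- The boundary operator `∂ₙ J = J Δ (J - n)` on finite subsets of `ℤ`. -/
def intBd (n : ℤ) (J : Finset ℤ) : Finset ℤ := symmDiff J (J.image (· - n))

lemma sub_emod_self' (a n : ℤ) : (a - n) % n = a % n := by
  rw [Int.emod_eq_emod_iff_emod_sub_eq_zero]; simp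

lemma add_emod_self' (a n : ℤ) : (a + n) % n = a % n := by
  rw [Int.emod_eq_emod_iff_emod_sub_eq_zero]; simp

lemma mem_intBd {n x : ℤ} {J : Finset ℤ} :
    x ∈ intBd n J ↔ ¬((x ∈ J) ↔ (x + n ∈ J)) := by
  have himg : x ∈ J.image (· - n) ↔ x + n ∈ J := by
    simp only [Finset.mem_image]
    constructor
    · rintro ⟨a, ha, e⟩
      have : a = x + n := by omega
      subst this; exact ha
    · intro h
      exact ⟨x + n, h, by ring⟩
  rw [intBd, Finset.mem_symmDiff, himg]
  tauto

lemma even_card_symmDiff {s t : Finset ℤ} (h : s.card = t.card) :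
    Even ((symmDiff s t).card) := by
  have h1 : (s \ t).card + (s ∩ t).card = s.card := Finset.card_sdiff_add_card_inter s t
  have h2 : (t \ s).card + (t ∩ s).card = t.card := Finset.card_sdiff_add_card_inter t s
  have h3 : (symmDiff s t).card = (s \ t).card + (t \ s).card := by
    rw [symmDiff_def, Finset.sup_eq_union, Finset.card_union_of_disjoint disjoint_sdiff_sdiff]
  have h4 : (t ∩ s).card = (s ∩ t).card := by rw [Finset.inter_comm]
  rw [Nat.even_iff]
  omega

lemma intBd_inj (n : ℤ) (hn : 0 < n) : Function.Injective (intBd n) := by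
  intro J J' h
  by_contra hne
  have hD : (symmDiff J J').Nonempty := by
    rw [Finset.nonempty_iff_ne_empty]
    intro he
    exact hne (by simpa using symmDiff_eq_bot.mp he)
  set m := (symmDiff J J').max' hD with hmdef
  have hm : m ∈ symmDiff J J' := Finset.max'_mem _ _
  have hmn : m + n ∉ symmDiff J J' := fun hc => absurd (Finset.le_max' _ _ hc) (by omega)
  rw [Finset.mem_symmDiff] at hm hmn
  have h1 : m ∈ intBd n J ↔ ¬((m ∈ J) ↔ (m + n ∈ J)) := mem_intBd
  have h2 : m ∈ intBd n J' ↔ ¬((m ∈ J') ↔ (m + n ∈ J')) := mem_intBd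
  rw [h] at h1
  tauto

lemma even_filter_intBd (n : ℤ) (hn : 0 < n) (J : Finset ℤ) (i : ℤ) :
    Even (((intBd n J).filter (fun m => m % n = i)).card) := by
  classical
  have hfilt : (intBd n J).filter (fun m => m % n = i) =
      symmDiff (J.filter (fun m => m % n = i))
        ((J.image (· - n)).filter (fun m => m % n = i)) := by
    ext x
    simp only [intBd, Finset.mem_filter, Finset.mem_symmDiff]
    tauto
  have himg : (J.image (· - n)).filter (fun m => m % n = i) =
      (J.filter (fun m => m % n = i)).image (· - n) := by
    ext x
    simp only [Finset.mem_filter, Finset.mem_image]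
    constructor
    · rintro ⟨⟨a, ha, rfl⟩, h2⟩
      refine ⟨a, ⟨ha, ?_⟩, rfl⟩
      rwa [sub_emod_self'] at h2
    · rintro ⟨a, ⟨ha, h2⟩, rfl⟩
      exact ⟨⟨a, ha, rfl⟩, by rwa [sub_emod_self']⟩
  rw [hfilt, himg]
  apply even_card_symmDiff
  rw [Finset.card_image_of_injective _ (fun a b hab => by omega)]

theorem stmt_0 (n : ℤ) (hn : 0 < n) :
    Function.Injective (intBd n) ∧
    Set.range (intBd n) =
      {K : Finset ℤ | ∀ i : ℤ, 0 ≤ i → i ≤ n - 1 →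
        Even ((K.filter (fun m => m % n = i)).card)} := by
  classical
  refine ⟨intBd_inj n hn, ?_⟩
  ext K
  simp only [Set.mem_range, Set.mem_setOf_eq]
  constructor
  · rintro ⟨J, rfl⟩ i _ _
    exact even_filter_intBd n hn J i
  · intro h
    have hclass : ∀ x : ℤ, Even ((K.filter (fun k => k % n = x % n)).card) := by
      intro x
      exact h (x % n) (Int.emod_nonneg x hn.ne') (by have := Int.emod_lt_of_pos x hn; omega)
    rcases K.eq_empty_or_nonempty with rfl | hK
    · exact ⟨∅, by simp [intBd]⟩
    set c : ℤ → ℕ := fun x => (K.filter (fun k => x ≤ k ∧ k % n = x % n)).card with hc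
    -- recurrence: c x = c (x+n) + (if x ∈ K then 1 else 0)
    have hrec : ∀ x : ℤ, c x = c (x + n) + (if x ∈ K then 1 else 0) := by
      intro x
      have hB : c (x + n) = (K.filter (fun k => x + n ≤ k ∧ k % n = x % n)).card := by
        simp only [hc, add_emod_self']
      have hcx : c x = (K.filter (fun k => x ≤ k ∧ k % n = x % n)).card := rfl
      set A := K.filter (fun k => x ≤ k ∧ k % n = x % n) with hA
      set B := K.filter (fun k => x + n ≤ k ∧ k % n = x % n) with hBdef
      have hsub : B ⊆ A := by
        intro k hk
        simp only [hA, hBdef, Finset.mem_filter] at *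
        exact ⟨hk.1, by omega, hk.2.2⟩
      have hdiff : A \ B = if x ∈ K then {x} else ∅ := by
        ext k
        simp only [Finset.mem_sdiff, hA, hBdef, Finset.mem_filter]
        constructor
        · rintro ⟨⟨hkK, hxk, hkm⟩, hnB⟩
          have hlt : k < x + n := by
            by_contra hge
            exact hnB ⟨hkK, by omega, hkm⟩
          have hd : (k - x) % n = 0 := Int.emod_eq_emod_iff_emod_sub_eq_zero.mp hkm
          have he : (k - x) % n = k - x :=
            Int.emod_eq_of_lt (by omega) (by omega)
          have hkx : k = x := by omega
          subst hkx
          rw [if_pos hkK]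
          exact Finset.mem_singleton_self k
        · intro hk
          by_cases hx : x ∈ K
          · rw [if_pos hx] at hk
            simp only [Finset.mem_singleton] at hk
            refine ⟨⟨hk ▸ hx, by omega, by rw [hk]⟩, ?_⟩
            rintro ⟨-, hge, -⟩
            omega
          · rw [if_neg hx] at hk
            simp at hk
      have hcard : (A \ B).card + B.card = A.card := Finset.card_sdiff_add_card_eq_card hsub
      rw [hdiff] at hcard
      by_cases hx : x ∈ K
      · rw [if_pos hx] at hcard ⊢
        rw [hcx, hB]
        simp only [Finset.card_singleton] at hcard
        omega
      · rw [if_neg hx] at hcard ⊢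
        rw [hcx, hB]
        simp only [Finset.card_empty] at hcard
        omega
    -- c x is even for x ≤ min K
    have hsmall : ∀ x : ℤ, x ≤ K.min' hK → Even (c x) := by
      intro x hx
      have heq : K.filter (fun k => x ≤ k ∧ k % n = x % n) =
          K.filter (fun k => k % n = x % n) := by
        apply Finset.filter_congr
        intro k hk
        have : x ≤ k := le_trans hx (K.min'_le k hk)
        simp [this]
      have : c x = (K.filter (fun k => k % n = x % n)).card := by
        rw [hc]; simp only; rw [heq]
      rw [this]
      exact hclass x
    set J := (Finset.Icc (K.min' hK) (K.max' hK)).filter (fun x => Odd (c x)) with hJ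
    have hmemJ : ∀ x : ℤ, x ∈ J ↔ Odd (c x) := by
      intro x
      simp only [hJ, Finset.mem_filter, Finset.mem_Icc, and_iff_right_iff_imp]
      intro hodd
      constructor
      · by_contra hlt
        push_neg at hlt
        have := hsmall x (le_of_lt hlt)
        exact (Nat.not_even_iff_odd.mpr hodd) this
      · have hne : c x ≠ 0 := by
          intro h0
          rw [h0] at hodd
          exact absurd (Nat.odd_iff.mp hodd) (by omega)
        rw [hc] at hne
        obtain ⟨k, hk⟩ := Finset.card_ne_zero.mp hne
        simp only [Finset.mem_filter] at hk
        exact le_trans hk.2.1 (K.le_max' k hk.1)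
    refine ⟨J, ?_⟩
    ext x
    rw [mem_intBd, hmemJ, hmemJ, hrec x]
    rw [Nat.odd_iff, Nat.odd_iff]
    by_cases hx : x ∈ K
    · simp only [if_pos hx]
      constructor
      · intro _; exact hx
      · intro _; omega
    · simp only [if_neg hx]
      constructor
      · intro hcon; omega
      · intro hcon; exact absurd hcon hx
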